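/- Terminal values of the recursive construction (equation (40) of the paper): after g steps one has c_g = f and V_g = ∅. -/

import Mathlib

/-- The set of the `f` smallest elements of a finite set `S` of naturals. -/
def takeMin (S : Finset ℕ) (f : ℕ) : Finset ℕ :=
  ((S.sort (· ≤ ·)).take f).toFinset

/-- The pair `(V_i, c_i)` of Definition 1 of the paper: `V_0 = {1, …, g}`, `c_0 = 1`;
in Case I (`|V_{i-1}| ≥ f`), `F_i` is the set of the `f` smallest elements of
`V_{i-1}`, `V_i = V_{i-1} \ F_i` and `c_i = c_{i-1}`; in Case II (`|V_{i-1}| < f`),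
`H_i = {1, …, f - |V_{i-1}|}`, `V_i = {1, …, g} \ H_i` and `c_i = c_{i-1} + 1`. -/
def paperVc (g f : ℕ) : ℕ → Finset ℕ × ℕ
  | 0 => (Finset.Icc 1 g, 1)
  | (i + 1) =>
    let V := (paperVc g f i).1
    let c := (paperVc g f i).2
    if f ≤ V.card then
      (V \ takeMin V f, c)
    else
      (Finset.Icc 1 g \ Finset.Icc 1 (f - V.card), c + 1)

/-- The set `F_i` of Definition 1 of the paper (`i ≥ 1`): the `f` smallest elements of
`V_{i-1}` in Case I, and `V_{i-1} ∪ H_i` in Case II. -/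
def paperF (g f : ℕ) (i : ℕ) : Finset ℕ :=
  let V := (paperVc g f (i - 1)).1
  if f ≤ V.card then takeMin V f
  else V ∪ Finset.Icc 1 (f - V.card)

/-- `H_i` of Case II of Definition 1. -/
def paperH (g f : ℕ) (i : ℕ) : Finset ℕ :=
  Finset.Icc 1 (f - (paperVc g f (i - 1)).1.card)

lemma sort_Icc (a b : ℕ) : (Finset.Icc a b).sort (· ≤ ·) = List.range' a (b + 1 - a) := by
  rw [Nat.Icc_eq_range']
  exact List.mergeSort_eq_self _ (List.pairwise_le_range' ..)

lemma sdiff_takeMin (a g f : ℕ) (h : f ≤ g + 1 - a) :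
    Finset.Icc a g \ takeMin (Finset.Icc a g) f = Finset.Icc (a + f) g := by
  unfold takeMin
  rw [sort_Icc, show g + 1 - a = f + (g + 1 - a - f) by omega, ← List.range'_append_1,
    List.take_left' (List.length_range' ..)]
  ext x
  simp only [Finset.mem_sdiff, Finset.mem_Icc, List.mem_toFinset, List.mem_range'_1]
  omega

lemma Icc_sdiff (g k : ℕ) : Finset.Icc 1 g \ Finset.Icc 1 k = Finset.Icc (k + 1) g := by
  ext x
  simp only [Finset.mem_sdiff, Finset.mem_Icc]
  omega

lemma paperVc_inv (g f : ℕ) (hf : 1 ≤ f) (hfg : f ≤ g) (i : ℕ) :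
    ∃ a, 1 ≤ a ∧ a ≤ g + 1 ∧ (i ≠ 0 → 2 ≤ a) ∧
      (paperVc g f i).1 = Finset.Icc a g ∧ f * i + g + 1 = g * (paperVc g f i).2 + a := by
  induction i with
  | zero => exact ⟨1, by simp [paperVc]⟩
  | succ i ih =>
    obtain ⟨a, ha1, ha2, _, hV, heq⟩ := ih
    have hrec : paperVc g f (i + 1) =
        if f ≤ (paperVc g f i).1.card then
          ((paperVc g f i).1 \ takeMin (paperVc g f i).1 f, (paperVc g f i).2)
        else
          (Finset.Icc 1 g \ Finset.Icc 1 (f - (paperVc g f i).1.card), (paperVc g f i).2 + 1) := rfl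
    rw [hrec, hV, Nat.card_Icc]
    by_cases hc : f ≤ g + 1 - a
    · refine ⟨a + f, by omega, by omega, by omega, ?_, ?_⟩
      · rw [if_pos hc, sdiff_takeMin a g f hc]
      · rw [if_pos hc]
        dsimp only
        have h2 : f * (i + 1) = f * i + f := by ring
        omega
    · refine ⟨f - (g + 1 - a) + 1, by omega, by omega, by omega, ?_, ?_⟩
      · rw [if_neg hc, Icc_sdiff]
      · rw [if_neg hc]
        dsimp only
        have h1 : g * ((paperVc g f i).2 + 1) = g * (paperVc g f i).2 + g := by ring
        have h2 : f * (i + 1) = f * i + f := by ring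
        omega


/-- Terminal values of the recursive construction (equation (40) of the paper):
`c_g = f` and `V_g = ∅`. -/
theorem paperVc_terminal (g f : ℕ) (hf : 1 ≤ f) (hfg : f ≤ g) :
    (paperVc g f g).2 = f ∧ (paperVc g f g).1 = ∅ := by
  obtain ⟨a, ha1, ha2, ha3, hV, heq⟩ := paperVc_inv g f hf hfg g
  have hg : g ≠ 0 := by omega
  have h2 : 2 ≤ a := ha3 hg
  have hd : g ∣ g + 1 - a := by
    have h1 : g ∣ g * (paperVc g f g).2 - f * g := Nat.dvd_sub ⟨_, rfl⟩ ⟨f, Nat.mul_comm f g⟩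
    have h2' : g * (paperVc g f g).2 - f * g = g + 1 - a := by omega
    exact h2' ▸ h1
  have hag : a = g + 1 := by
    rcases Nat.eq_zero_or_pos (g + 1 - a) with h | h
    · omega
    · have := Nat.le_of_dvd h hd; omega
  constructor
  · have h' : g * (paperVc g f g).2 = f * g := by omega
    rw [Nat.mul_comm f g] at h'
    exact Nat.eq_of_mul_eq_mul_left (by omega) h'
  · rw [hV, hag]
    exact Finset.Icc_eq_empty (by omega)
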